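/- Let k ≥ 1 and p ≥ 0 be fixed integers. Then there exists a constant N_{p,k} > 0 such that for every integer n ≥ k + p + 2, every differentiable function f : [0,∞) → ℝ with both f ∈ C_p and f' ∈ C_p, and every x > 0, w_p(x)·|M_{n,k}(f; x) − f(x)| ≤ N_{p,k} · ‖f'‖_p · x/√n. -/

import Mathlib

open MeasureTheory Set

/-- The Gamma-type operator `M_{n,k}(f;x)`. -/
noncomputable def Mnk (n k : ℕ) (f : ℝ → ℝ) (x : ℝ) : ℝ :=
  (((2 * n - k + 1).factorial : ℝ) * x ^ (n + 1) /
      ((n.factorial : ℝ) * ((n - k).factorial : ℝ))) *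
    ∫ t in Ioi (0 : ℝ), t ^ (n - k) / (x + t) ^ (2 * n - k + 2) * f t

/-- The polynomial weight: `w_0 = 1`, `w_p(x) = 1/(1+x^p)` for `p ≥ 1`. -/
noncomputable def wp (p : ℕ) (x : ℝ) : ℝ := if p = 0 then 1 else 1 / (1 + x ^ p)

/-- The weighted sup-norm `‖f‖_p = sup_{x ≥ 0} w_p(x)|f(x)|`. -/
noncomputable def pNorm (p : ℕ) (f : ℝ → ℝ) : ℝ :=
  ⨆ x : {x : ℝ // 0 ≤ x}, wp p x.val * |f x.val|

/-- Second symmetric difference `Δ_h² f`. -/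
def Delta2 (h : ℝ) (f : ℝ → ℝ) (x : ℝ) : ℝ := f (x + 2 * h) - 2 * f (x + h) + f x

/-- Second weighted modulus of smoothness `ω_p²(f;δ)`. -/
noncomputable def omega2 (p : ℕ) (f : ℝ → ℝ) (δ : ℝ) : ℝ :=
  ⨆ h : {h : ℝ // 0 < h ∧ h ≤ δ}, pNorm p (Delta2 h.val f)

/-- First weighted modulus `ω_p¹(f;δ)`. -/
noncomputable def omega1 (p : ℕ) (f : ℝ → ℝ) (δ : ℝ) : ℝ :=
  sSup {y : ℝ | ∃ t x : ℝ, 0 ≤ t ∧ 0 ≤ x ∧ |t - x| ≤ δ ∧ y = wp p x * |f t - f x|}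

/-- Membership in the weighted space `C_p`: `w_p·f` is bounded and uniformly
continuous on `[0,∞)`. -/
def CpMem (p : ℕ) (f : ℝ → ℝ) : Prop :=
  (∃ B : ℝ, ∀ x ≥ (0 : ℝ), |wp p x * f x| ≤ B) ∧
    UniformContinuousOn (fun x => wp p x * f x) (Ici 0)

/-- Steklov mean `f_h`. -/
noncomputable def steklov (f : ℝ → ℝ) (h : ℝ) (x : ℝ) : ℝ :=
  4 / h ^ 2 *
    ∫ s in (0 : ℝ)..(h / 2), ∫ t in (0 : ℝ)..(h / 2),
      (2 * f (x + s + t) - f (x + 2 * (s + t)))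

section AuxProof
open Filter Topology

lemma Jbase (x : ℝ) (hx : 0 < x) (c : ℕ) :
    IntegrableOn (fun t => ((x + t) ^ (c + 2))⁻¹) (Ioi (0:ℝ)) ∧
      ∫ t in Ioi (0:ℝ), ((x + t) ^ (c + 2))⁻¹ = (x ^ (c + 1))⁻¹ / (c + 1) := by
  set F : ℝ → ℝ := fun t => -(((c:ℝ) + 1)⁻¹ * ((x + t) ^ (c + 1))⁻¹) with hF
  have hder : ∀ t ∈ Ioi (0:ℝ), HasDerivAt F (((x + t) ^ (c + 2))⁻¹) t := by
    intro t ht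
    have hxt : (0:ℝ) < x + t := by have := ht.out; linarith
    have h1 : HasDerivAt (fun t : ℝ => (x + t) ^ (c + 1))
        (((c : ℝ) + 1) * (x + t) ^ c) t := by
      have := ((hasDerivAt_id t).const_add x).pow (c + 1)
      simpa [Pi.pow_def] using this
    have h2 := (h1.inv (by positivity)).const_mul (((c:ℝ) + 1)⁻¹)
    have h3 := h2.neg
    refine h3.congr_deriv ?_
    have : x + t ≠ 0 := ne_of_gt hxt
    field_simp
    ring
  have hcont : ContinuousWithinAt F (Ici (0:ℝ)) 0 := by
    apply ContinuousAt.continuousWithinAt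
    have h0 : (x + 0) ^ (c+1) ≠ 0 := by positivity
    fun_prop (disch := assumption)
  have htend : Tendsto F atTop (𝓝 0) := by
    rw [hF]
    have h1 : Tendsto (fun t : ℝ => (x + t) ^ (c + 1)) atTop atTop :=
      (tendsto_pow_atTop (by omega)).comp (tendsto_atTop_add_const_left _ x tendsto_id)
    have h2 := h1.inv_tendsto_atTop
    have := (h2.const_mul (((c:ℝ) + 1)⁻¹)).neg
    simpa using this
  have hpos : ∀ t ∈ Ioi (0:ℝ), 0 ≤ ((x + t) ^ (c + 2))⁻¹ := by
    intro t ht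
    have : (0:ℝ) < x + t := by have := ht.out; linarith
    positivity
  refine ⟨integrableOn_Ioi_deriv_of_nonneg hcont hder hpos htend, ?_⟩
  rw [integral_Ioi_of_hasDerivAt_of_nonneg hcont hder hpos htend]
  simp only [hF]
  have hc : ((c:ℝ) + 1) ≠ 0 := by positivity
  have hxne : x ≠ 0 := ne_of_gt hx
  field_simp
  ring

lemma Jlemma (x : ℝ) (hx : 0 < x) (c : ℕ) : ∀ a : ℕ,
    IntegrableOn (fun t => t ^ a / (x + t) ^ (a + c + 2)) (Ioi (0:ℝ)) ∧
      ∫ t in Ioi (0:ℝ), t ^ a / (x + t) ^ (a + c + 2)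
        = ((a.factorial : ℝ) * c.factorial / (a + c + 1).factorial) / x ^ (c + 1) := by
  intro a
  induction a with
  | zero =>
      have h := Jbase x hx c
      have hfun : (fun t : ℝ => t ^ 0 / (x + t) ^ (0 + c + 2))
          = fun t : ℝ => ((x + t) ^ (c + 2))⁻¹ := by
        funext t; simp [Nat.zero_add, one_div]
      rw [hfun]
      refine ⟨h.1, ?_⟩
      rw [h.2]
      have h1 : ((0 + c + 1).factorial : ℝ) = (c + 1) * c.factorial := by
        rw [Nat.zero_add, Nat.factorial_succ]; push_cast; ring
      rw [h1]
      have hc0 : (c.factorial : ℝ) ≠ 0 := by positivity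
      have : ((c:ℝ) + 1) ≠ 0 := by positivity
      have hxne : x ^ (c+1) ≠ 0 := by positivity
      field_simp
      ring
  | succ a ih =>
      set i1 : ℝ → ℝ := fun t => t ^ a / (x + t) ^ (a + c + 2) with hi1
      set i2 : ℝ → ℝ := fun t => t ^ (a + 1) / (x + t) ^ (a + c + 3) with hi2
      have hgoalfun : (fun t : ℝ => t ^ (a + 1) / (x + t) ^ (a + 1 + c + 2)) = i2 := by
        funext t; rw [hi2]; norm_num; rw [show a + 1 + c + 2 = a + c + 3 by omega]
      have hxtpos : ∀ t : ℝ, t ∈ Ioi (0:ℝ) → (0:ℝ) < x + t := by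
        intro t ht; have := ht.out; linarith
      have key : ∀ t ∈ Ioi (0:ℝ), i2 t ≤ i1 t := by
        intro t ht
        have ht' := ht.out
        have hxt := hxtpos t ht
        have heq : i2 t = i1 t * (t / (x + t)) := by
          show t ^ (a+1) / (x + t) ^ (a+c+3) = t ^ a / (x + t) ^ (a+c+2) * (t / (x + t))
          rw [show a + c + 3 = (a + c + 2) + 1 by omega, pow_succ, pow_succ]
          field_simp
        rw [heq]
        have h01 : t / (x + t) ≤ 1 := by
          rw [div_le_one hxt]; linarith
        have hnn : 0 ≤ i1 t := by rw [hi1]; positivity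
        exact mul_le_of_le_one_right hnn h01
      have hmeas : AEStronglyMeasurable i2 (volume.restrict (Ioi (0:ℝ))) := by
        apply ContinuousOn.aestronglyMeasurable _ measurableSet_Ioi
        intro t ht
        have hxt := hxtpos t ht
        have h0 : (x + t) ^ (a + c + 3) ≠ 0 := by positivity
        exact ContinuousWithinAt.div (((continuous_pow _).continuousOn) t ht)
          ((((continuous_const.add continuous_id).pow _).continuousOn) t ht) h0
      have int2 : IntegrableOn i2 (Ioi (0:ℝ)) := by
        apply Integrable.mono' ih.1 hmeas
        rw [ae_restrict_iff' measurableSet_Ioi]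
        filter_upwards with t ht
        have hxt := hxtpos t ht
        have ht' := ht.out
        rw [Real.norm_eq_abs, abs_of_nonneg (by rw [hi2]; positivity)]
        exact key t ht
      set F : ℝ → ℝ := fun t => t ^ (a + 1) * ((x + t) ^ (a + c + 2))⁻¹ with hFdef
      set G : ℝ → ℝ := fun t => ((a:ℝ) + 1) * i1 t - ((a:ℝ) + c + 2) * i2 t with hGdef
      have hder : ∀ t ∈ Ioi (0:ℝ), HasDerivAt F (G t) t := by
        intro t ht
        have hxt := hxtpos t ht
        have hne : (x + t) ^ (a + c + 2) ≠ 0 := by positivity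
        have h1 : HasDerivAt (fun t : ℝ => t ^ (a + 1)) (((a:ℝ) + 1) * t ^ a) t := by
          simpa using hasDerivAt_pow (a + 1) t
        have h2 : HasDerivAt (fun t : ℝ => (x + t) ^ (a + c + 2))
            (((a:ℝ) + c + 2) * (x + t) ^ (a + c + 1)) t := by
          have := ((hasDerivAt_id t).const_add x).pow (a + c + 2)
          refine this.congr_deriv ?_
          simp only [id_eq]
          push_cast
          ring
        have h4 := h1.mul (h2.inv hne)
        refine h4.congr_deriv ?_
        simp only [hGdef, hi1, hi2, id_eq, Pi.inv_apply]
        have hne2 : x + t ≠ 0 := ne_of_gt hxt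
        field_simp
        ring
      have hcont : ContinuousWithinAt F (Ici (0:ℝ)) 0 := by
        apply ContinuousAt.continuousWithinAt
        have h0 : (x + 0) ^ (a + c + 2) ≠ 0 := by positivity
        fun_prop (disch := assumption)
      have htend : Tendsto F atTop (𝓝 0) := by
        have hub : Tendsto (fun t : ℝ => ((x + t) ^ (c + 1))⁻¹) atTop (𝓝 0) := by
          apply Tendsto.inv_tendsto_atTop
          exact (tendsto_pow_atTop (by omega)).comp (tendsto_atTop_add_const_left _ x tendsto_id)
        apply tendsto_of_tendsto_of_tendsto_of_le_of_le' tendsto_const_nhds hub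
        · filter_upwards [eventually_ge_atTop (0:ℝ)] with t ht
          have : (0:ℝ) < x + t := by linarith
          rw [hFdef]; positivity
        · filter_upwards [eventually_ge_atTop (0:ℝ)] with t ht
          have hxt : (0:ℝ) < x + t := by linarith
          show t ^ (a + 1) * ((x + t) ^ (a + c + 2))⁻¹ ≤ ((x + t) ^ (c + 1))⁻¹
          have h5 : t ^ (a + 1) * (x + t) ^ (c + 1) ≤ (x + t) ^ (a + c + 2) := by
            calc t ^ (a + 1) * (x + t) ^ (c + 1)
                ≤ (x + t) ^ (a + 1) * (x + t) ^ (c + 1) := by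
                  gcongr; linarith
              _ = (x + t) ^ (a + c + 2) := by rw [← pow_add]; congr 1; omega
          rw [← div_eq_mul_inv, div_le_iff₀ (by positivity : (0:ℝ) < (x+t)^(a+c+2))]
          calc t ^ (a + 1)
              = ((x + t) ^ (c + 1))⁻¹ * (t ^ (a + 1) * (x + t) ^ (c + 1)) := by
                field_simp
            _ ≤ ((x + t) ^ (c + 1))⁻¹ * (x + t) ^ (a + c + 2) := by
                gcongr
            _ = ((x + t) ^ (c + 1))⁻¹ * (x + t) ^ (a + c + 2) := rfl
      have hGint : IntegrableOn G (Ioi (0:ℝ)) := by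
        exact (ih.1.const_mul _).sub (int2.const_mul _)
      have hFTC := integral_Ioi_of_hasDerivAt_of_tendsto hcont hder hGint htend
      have hF0 : F 0 = 0 := by rw [hFdef]; simp
      rw [hF0, sub_zero] at hFTC
      have hsplit : ∫ t in Ioi (0:ℝ), G t
          = ((a:ℝ) + 1) * (∫ t in Ioi (0:ℝ), i1 t)
            - ((a:ℝ) + c + 2) * (∫ t in Ioi (0:ℝ), i2 t) := by
        rw [hGdef]
        rw [integral_sub (ih.1.const_mul _) (int2.const_mul _),
          integral_const_mul, integral_const_mul]
      rw [hsplit] at hFTC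
      have hval : ∫ t in Ioi (0:ℝ), i2 t
          = ((a:ℝ) + 1) / ((a:ℝ) + c + 2) * ∫ t in Ioi (0:ℝ), i1 t := by
        have hne : ((a:ℝ) + c + 2) ≠ 0 := by positivity
        rw [div_mul_eq_mul_div, eq_div_iff hne]
        linear_combination -hFTC
      rw [hgoalfun]
      refine ⟨int2, ?_⟩
      rw [hval, ih.2]
      have hfac1 : ((a+1).factorial : ℝ) = ((a:ℝ) + 1) * a.factorial := by
        rw [Nat.factorial_succ]; push_cast; ring
      have hfac2 : ((a + 1 + c + 1).factorial : ℝ) = ((a:ℝ) + c + 2) * (a + c + 1).factorial := by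
        rw [show a + 1 + c + 1 = (a + c + 1) + 1 by omega, Nat.factorial_succ]; push_cast; ring
      rw [hfac1, hfac2]
      have h1 : ((a + c + 1).factorial : ℝ) ≠ 0 := by positivity
      have h2 : (a.factorial : ℝ) ≠ 0 := by positivity
      have h3 : (c.factorial : ℝ) ≠ 0 := by positivity
      have h4 : ((a:ℝ) + c + 2) ≠ 0 := by positivity
      have h5 : x ^ (c + 1) ≠ 0 := by positivity
      field_simp


noncomputable def aCoef (n k m : ℕ) : ℝ :=
  ((n - k + m).factorial : ℝ) * ((n - m).factorial : ℝ) /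
    (((n - k).factorial : ℝ) * (n.factorial : ℝ))

lemma aCoef_zero (n k : ℕ) : aCoef n k 0 = 1 := by
  unfold aCoef
  have h1 : ((n-k).factorial : ℝ) ≠ 0 := by positivity
  have h2 : (n.factorial : ℝ) ≠ 0 := by positivity
  field_simp
  simp

lemma aCoef_pos (n k m : ℕ) : 0 < aCoef n k m := by
  unfold aCoef; positivity

lemma aCoef_succ (n k m : ℕ) (hk : k ≤ n) (hm : m < n) :
    aCoef n k (m+1) * ((n:ℝ) - m) = aCoef n k m * ((n:ℝ) - k + m + 1) := by
  unfold aCoef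
  have h1 : n - k + (m+1) = (n - k + m) + 1 := by omega
  have h2 : n - m = (n - (m+1)) + 1 := by omega
  rw [h1, Nat.factorial_succ, h2, Nat.factorial_succ]
  have hc1 : ((n - k + m + 1 : ℕ) : ℝ) = (n:ℝ) - k + m + 1 := by
    have : ((n - k : ℕ) : ℝ) = (n:ℝ) - k := Nat.cast_sub hk
    push_cast [this]; ring
  have hc2 : ((n - (m+1) + 1 : ℕ) : ℝ) = (n:ℝ) - m := by
    have h3 : ((n - (m+1) : ℕ) : ℝ) = ((m+1 : ℕ):ℝ) - (m+1:ℕ) + ((n:ℝ) - (m+1)) := by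
      rw [Nat.cast_sub (by omega : m + 1 ≤ n)]; push_cast; ring
    push_cast [Nat.cast_sub (by omega : m + 1 ≤ n)]; ring
  push_cast [hc1, hc2]
  ring

lemma aCoef_le (n k p : ℕ) (hk : 1 ≤ k) (hn : k + p + 2 ≤ n) :
    ∀ m, m ≤ p + 2 → aCoef n k m ≤ (2*(p:ℝ) + 8) ^ m := by
  intro m
  induction m with
  | zero => intro _; rw [aCoef_zero]; norm_num
  | succ m ih =>
      intro hm
      have hm' : m ≤ p + 2 := by omega
      have ihm := ih hm'
      have hmn : m < n := by omega
      have hrec := aCoef_succ n k m (by omega) hmn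
      have hγ : (0:ℝ) < (n:ℝ) - m := by
        have : (m:ℝ) < (n:ℝ) := by exact_mod_cast hmn
        linarith
      have hval : aCoef n k (m+1) = aCoef n k m * ((n:ℝ) - k + m + 1) / ((n:ℝ) - m) := by
        field_simp
        linarith [hrec]
      rw [hval]
      have hbound : (n:ℝ) - k + m + 1 ≤ (2*(p:ℝ) + 8) * ((n:ℝ) - m) := by
        have hn' : (k:ℝ) + p + 2 ≤ n := by exact_mod_cast hn
        have hk' : (1:ℝ) ≤ k := by exact_mod_cast hk
        have hmp : (m:ℝ) ≤ (p:ℝ) + 1 := by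
          have : m ≤ p + 1 := by omega
          exact_mod_cast this
        have hp0 : (0:ℝ) ≤ p := by positivity
        nlinarith [mul_nonneg (by linarith : (0:ℝ) ≤ (p:ℝ)+3) (by linarith : (0:ℝ) ≤ (n:ℝ) - p - 3),
          mul_nonneg (by linarith : (0:ℝ) ≤ 2*(p:ℝ)+8) (by linarith : (0:ℝ) ≤ (p:ℝ) + 1 - m)]
      have hA0 : 0 < aCoef n k m := aCoef_pos n k m
      rw [div_le_iff₀ hγ]
      calc aCoef n k m * ((n:ℝ) - k + m + 1)
          ≤ aCoef n k m * ((2*(p:ℝ) + 8) * ((n:ℝ) - m)) := by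
            exact mul_le_mul_of_nonneg_left hbound (le_of_lt hA0)
        _ ≤ (2*(p:ℝ)+8)^m * ((2*(p:ℝ) + 8) * ((n:ℝ) - m)) := by
            have h8 : (0:ℝ) ≤ (2*(p:ℝ) + 8) * ((n:ℝ) - m) := by positivity
            exact mul_le_mul_of_nonneg_right ihm h8
        _ = (2*(p:ℝ)+8)^(m+1) * ((n:ℝ) - m) := by rw [pow_succ]; ring

lemma aCoef_diff (n k m : ℕ) (hk : k ≤ n) (hm : m + 2 ≤ n) :
    aCoef n k (m+2) - 2 * aCoef n k (m+1) + aCoef n k m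
      = aCoef n k m * (2*((n:ℝ) - m) + (2*(m:ℝ)+1-k)^2 + 3*(2*(m:ℝ)+1-k))
        / (((n:ℝ) - m) * ((n:ℝ) - m - 1)) := by
  have h1 := aCoef_succ n k m hk (by omega)
  have h2 := aCoef_succ n k (m+1) hk (by omega)
  push_cast at h2
  have hγ1 : (0:ℝ) < (n:ℝ) - m := by
    have : (m:ℝ) < (n:ℝ) := by exact_mod_cast (by omega : m < n)
    linarith
  have hγ2 : (0:ℝ) < (n:ℝ) - m - 1 := by
    have : ((m:ℝ) + 1) < (n:ℝ) := by exact_mod_cast (by omega : m + 1 < n)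
    linarith
  rw [eq_div_iff (by positivity)]
  have hidx : m + 1 + 1 = m + 2 := rfl
  rw [hidx] at h2
  linear_combination (((n:ℝ) - m) * h2
    + ((2*(m:ℝ)+1-(k:ℝ)) + 3 - ((n:ℝ) - m)) * h1)

lemma aCoef_diff_le (n k p m : ℕ) (hk : 1 ≤ k) (hn : k + p + 2 ≤ n) (hm : m ≤ p) :
    aCoef n k (m+2) - 2 * aCoef n k (m+1) + aCoef n k m
      ≤ (2*(p:ℝ)+8)^(p+2) * (2 + (2*(p:ℝ)+4+(k:ℝ))^2) * ((p:ℝ)+2) / n := by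
  rw [aCoef_diff n k m (by omega) (by omega)]
  have hmr : (m:ℝ) ≤ (p:ℝ) := by exact_mod_cast hm
  have hnr : (k:ℝ) + p + 2 ≤ (n:ℝ) := by exact_mod_cast hn
  have hkr : (1:ℝ) ≤ (k:ℝ) := by exact_mod_cast hk
  have hp0 : (0:ℝ) ≤ (p:ℝ) := by positivity
  set s : ℝ := 2*(m:ℝ)+1-k with hs
  set γ : ℝ := (n:ℝ) - m with hγ
  set A0 : ℝ := aCoef n k m with hA0
  set A : ℝ := (2*(p:ℝ)+8)^(p+2) with hA
  set Qb : ℝ := 2 + (2*(p:ℝ)+4+(k:ℝ))^2 with hQb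
  have hγ3 : (3:ℝ) ≤ γ := by rw [hγ]; linarith
  have hγpos : (0:ℝ) < γ := by linarith
  have hγ1pos : (0:ℝ) < γ - 1 := by linarith
  have hnpos : (0:ℝ) < (n:ℝ) := by linarith
  have hA0pos : (0:ℝ) < A0 := aCoef_pos n k m
  have hA0A : A0 ≤ A := by
    calc A0 ≤ (2*(p:ℝ)+8)^m := aCoef_le n k p hk hn m (by omega)
      _ ≤ A := by
          rw [hA]
          exact pow_le_pow_right₀ (by linarith) (by omega)
  have hApos : (0:ℝ) < A := by rw [hA]; positivity
  have hQ : 2*γ + s^2 + 3*s ≤ Qb * γ := by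
    have h1 : (0:ℝ) ≤ (2*(p:ℝ)+4+k) - s - 5 := by rw [hs]; linarith
    have h2 : (0:ℝ) ≤ (2*(p:ℝ)+4+k) + s := by rw [hs]; linarith
    have h3 : s ^ 2 + 3*s ≤ (2*(p:ℝ)+4+k)^2 := by nlinarith [mul_nonneg h1 h2]
    have h4 : (2*(p:ℝ)+4+k)^2 ≤ (2*(p:ℝ)+4+k)^2 * γ := by
      nlinarith [sq_nonneg (2*(p:ℝ)+4+k)]
    rw [hQb]
    nlinarith
  have hn2 : (n:ℝ) ≤ ((p:ℝ)+2) * (γ - 1) := by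
    rw [hγ]
    nlinarith [mul_nonneg (by linarith : (0:ℝ) ≤ (p:ℝ)+1) (by linarith : (0:ℝ) ≤ (n:ℝ)-p-2),
      mul_nonneg (by linarith : (0:ℝ) ≤ (p:ℝ)+2) (by linarith : (0:ℝ) ≤ (p:ℝ)-m)]
  rw [div_le_div_iff₀ (by positivity) hnpos]
  set Q : ℝ := 2*γ + s^2 + 3*s with hQdef
  rcases le_or_gt Q 0 with hq | hq
  · have hL : A0 * Q * (n:ℝ) ≤ 0 := by
      have : A0 * Q ≤ 0 := mul_nonpos_of_nonneg_of_nonpos (le_of_lt hA0pos) hq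
      exact mul_nonpos_of_nonpos_of_nonneg this (le_of_lt hnpos)
    have hR : (0:ℝ) ≤ A * Qb * ((p:ℝ)+2) * (γ * (γ-1)) := by
      have : (0:ℝ) ≤ Qb := by rw [hQb]; positivity
      have h9 : (0:ℝ) ≤ γ * (γ - 1) := by positivity
      positivity
    linarith
  · have hQbpos : (0:ℝ) < Qb := by rw [hQb]; positivity
    calc A0 * Q * (n:ℝ) ≤ A * Q * (n:ℝ) := by
          apply mul_le_mul_of_nonneg_right _ (le_of_lt hnpos)
          exact mul_le_mul_of_nonneg_right hA0A (le_of_lt hq)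
      _ ≤ A * (Qb * γ) * (n:ℝ) := by
          apply mul_le_mul_of_nonneg_right _ (le_of_lt hnpos)
          exact mul_le_mul_of_nonneg_left hQ (le_of_lt hApos)
      _ ≤ A * (Qb * γ) * (((p:ℝ)+2) * (γ-1)) := by
          apply mul_le_mul_of_nonneg_left hn2
          positivity
      _ = A * Qb * ((p:ℝ)+2) * (γ * (γ-1)) := by ring

lemma kernel_moment (n k m : ℕ) (hk : k ≤ n) (hm : m ≤ n) (x : ℝ) (hx : 0 < x) :
    IntegrableOn (fun t => t ^ (n - k) / (x + t) ^ (2*n - k + 2) * t ^ m) (Ioi (0:ℝ)) ∧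
      (((2 * n - k + 1).factorial : ℝ) * x ^ (n + 1) /
          ((n.factorial : ℝ) * ((n - k).factorial : ℝ))) *
        ∫ t in Ioi (0:ℝ), t ^ (n - k) / (x + t) ^ (2*n - k + 2) * t ^ m
        = aCoef n k m * x ^ m := by
  have hJ := Jlemma x hx (n - m) (n - k + m)
  have hfun : (fun t : ℝ => t ^ (n - k) / (x + t) ^ (2*n - k + 2) * t ^ m)
      = fun t : ℝ => t ^ (n - k + m) / (x + t) ^ ((n - k + m) + (n - m) + 2) := by
    funext t
    rw [show (n - k + m) + (n - m) + 2 = 2*n - k + 2 by omega, pow_add]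
    ring
  rw [hfun]
  refine ⟨hJ.1, ?_⟩
  rw [hJ.2]
  rw [show (n - k + m) + (n - m) + 1 = 2*n - k + 1 by omega]
  unfold aCoef
  have hxpow : x ^ (n + 1) = x ^ ((n - m) + 1) * x ^ m := by
    rw [← pow_add]; congr 1; omega
  rw [hxpow]
  have e1 : ((2*n - k + 1).factorial : ℝ) ≠ 0 := by positivity
  have e2 : (n.factorial : ℝ) ≠ 0 := by positivity
  have e3 : ((n - k).factorial : ℝ) ≠ 0 := by positivity
  have e4 : x ^ ((n - m) + 1) ≠ 0 := by positivity
  field_simp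

lemma core_est (n k p : ℕ) (hk : 1 ≤ k) (hn : k + p + 2 ≤ n)
    (x δ : ℝ) (hx : 0 < x) (hδ : 0 < δ)
    (f : ℝ → ℝ) (hfc : ContinuousOn f (Ici (0:ℝ)))
    (B L : ℝ) (hL : 0 ≤ L)
    (hfb : ∀ t : ℝ, 0 < t → |f t| ≤ B * (1 + t ^ p))
    (hdiff : ∀ t : ℝ, 0 < t → |f t - f x| ≤ L * ((1 + x^p + t^p) * |t - x|)) :
    |Mnk n k f x - f x| ≤ L * ((1 + x^p + aCoef n k p * x^p) * δ
      + ((1 + x^p) * (aCoef n k 2 - 2*aCoef n k 1 + aCoef n k 0) * x^2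
         + (aCoef n k (p+2) - 2*aCoef n k (p+1) + aCoef n k p) * x^(p+2)) / δ) := by
  have hkn : k ≤ n := by omega
  set κ : ℝ := ((2 * n - k + 1).factorial : ℝ) * x ^ (n + 1) /
      ((n.factorial : ℝ) * ((n - k).factorial : ℝ)) with hκdef
  have hκpos : 0 < κ := by rw [hκdef]; positivity
  set K : ℝ → ℝ := fun t => t ^ (n - k) / (x + t) ^ (2*n - k + 2) with hKdef
  have hKnn : ∀ t : ℝ, 0 < t → 0 ≤ K t := by
    intro t ht; rw [hKdef]
    have : (0:ℝ) < x + t := by linarith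
    positivity
  have Int : ∀ m : ℕ, m ≤ n → IntegrableOn (fun t => K t * t ^ m) (Ioi (0:ℝ)) :=
    fun m hm => (kernel_moment n k m hkn hm x hx).1
  have Mom : ∀ m : ℕ, m ≤ n → κ * ∫ t in Ioi (0:ℝ), K t * t ^ m = aCoef n k m * x ^ m :=
    fun m hm => (kernel_moment n k m hkn hm x hx).2
  -- integrability of K * f
  have hKfint : IntegrableOn (fun t => K t * f t) (Ioi (0:ℝ)) := by
    apply Integrable.mono' (((Int 0 (by omega)).add (Int p (by omega))).const_mul B)
    · apply ContinuousOn.aestronglyMeasurable _ measurableSet_Ioi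
      apply ContinuousOn.mul
      · intro t ht
        have hxt : (0:ℝ) < x + t := by have := ht.out; linarith
        exact ContinuousWithinAt.div (((continuous_pow _).continuousOn) t ht)
          ((((continuous_const.add continuous_id).pow _).continuousOn) t ht) (by positivity)
      · exact hfc.mono (fun t ht => le_of_lt ht.out)
    · rw [ae_restrict_iff' measurableSet_Ioi]
      filter_upwards with t ht
      have hKt := hKnn t ht.out
      rw [Real.norm_eq_abs, abs_mul, abs_of_nonneg hKt]
      calc K t * |f t| ≤ K t * (B * (1 + t ^ p)) :=
            mul_le_mul_of_nonneg_left (hfb t ht.out) hKt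
        _ = B * (K t * t ^ 0 + K t * t ^ p) := by ring
  -- the centered integral
  have hone : κ * ∫ t in Ioi (0:ℝ), K t * t ^ 0 = 1 := by
    rw [Mom 0 (by omega), aCoef_zero]; simp
  have hsplit : Mnk n k f x - f x = κ * ∫ t in Ioi (0:ℝ), K t * (f t - f x) := by
    have hfun : (fun t => K t * (f t - f x))
        = fun t => (fun s => K s * f s) t - f x * (K t * t ^ 0) := by
      funext t; simp; ring
    rw [hfun, integral_sub hKfint ((Int 0 (by omega)).const_mul (f x)),
      integral_const_mul, mul_sub, ← mul_assoc, mul_comm κ (f x), mul_assoc,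
      hone, mul_one]
    rfl
  -- the comparison function P
  set P : ℝ → ℝ := fun t => (1 + x^p + t^p) * (δ + (t - x)^2 / δ) with hPdef
  have hPb : ∀ t ∈ Ioi (0:ℝ), |f t - f x| ≤ L * P t := by
    intro t ht
    have ht' := ht.out
    have habs : |t - x| ≤ δ + (t - x)^2 / δ := by
      rw [← sub_nonneg]
      have heq : δ + (t-x)^2/δ - |t - x| = (δ * δ + (t-x)^2 - |t - x| * δ)/δ := by
        field_simp
      rw [heq]
      apply div_nonneg _ (le_of_lt hδ)
      nlinarith [sq_nonneg (|t - x| - δ), sq_abs (t - x)]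
    calc |f t - f x| ≤ L * ((1 + x^p + t^p) * |t - x|) := hdiff t ht'
      _ ≤ L * P t := by
          apply mul_le_mul_of_nonneg_left _ hL
          rw [hPdef]
          apply mul_le_mul_of_nonneg_left habs
          positivity
  -- expansion of K * P
  set c0 : ℝ := (1 + x^p) * (δ + x^2/δ) with hc0
  set c1 : ℝ := (1 + x^p) * (-2*x/δ) with hc1
  set c2 : ℝ := (1 + x^p) / δ with hc2
  set d0 : ℝ := δ + x^2/δ with hd0
  set d1 : ℝ := -2*x/δ with hd1
  set d2 : ℝ := 1/δ with hd2
  have hexp : (fun t => K t * P t) = fun t =>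
      c0 * (K t * t ^ 0) + c1 * (K t * t ^ 1) + c2 * (K t * t ^ 2)
      + d0 * (K t * t ^ p) + d1 * (K t * t ^ (p+1)) + d2 * (K t * t ^ (p+2)) := by
    funext t
    have hPt : P t = c0 + c1 * t^1 + c2 * t^2 + d0 * t^p + d1 * t^(p+1) + d2 * t^(p+2) := by
      rw [hPdef, hc0, hc1, hc2, hd0, hd1, hd2]
      have hδne : δ ≠ 0 := ne_of_gt hδ
      field_simp
      ring
    rw [hPt]; ring
  have hI0 := Int 0 (by omega)
  have hI1 := Int 1 (by omega)
  have hI2 := Int 2 (by omega)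
  have hIp := Int p (by omega)
  have hIp1 := Int (p+1) (by omega)
  have hIp2 := Int (p+2) (by omega)
  have hKPint : IntegrableOn (fun t => K t * P t) (Ioi (0:ℝ)) := by
    rw [hexp]
    exact (((((hI0.const_mul c0).add (hI1.const_mul c1)).add (hI2.const_mul c2)).add
      (hIp.const_mul d0)).add (hIp1.const_mul d1)).add (hIp2.const_mul d2)
  -- bound the centered integral
  have hKdiffint : IntegrableOn (fun t => K t * (f t - f x)) (Ioi (0:ℝ)) := by
    have hfun : (fun t => K t * (f t - f x))
        = fun t => (fun s => K s * f s) t - f x * (K t * t ^ 0) := by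
      funext t; simp; ring
    rw [hfun]
    exact hKfint.sub ((Int 0 (by omega)).const_mul (f x))
  have hbound : |∫ t in Ioi (0:ℝ), K t * (f t - f x)|
      ≤ L * ∫ t in Ioi (0:ℝ), K t * P t := by
    calc |∫ t in Ioi (0:ℝ), K t * (f t - f x)|
        ≤ ∫ t in Ioi (0:ℝ), |K t * (f t - f x)| := by
          simpa only [Real.norm_eq_abs] using
            norm_integral_le_integral_norm (μ := volume.restrict (Ioi (0:ℝ)))
              (fun t => K t * (f t - f x))
      _ ≤ ∫ t in Ioi (0:ℝ), L * (K t * P t) := by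
          apply setIntegral_mono_on hKdiffint.abs (hKPint.const_mul L) measurableSet_Ioi
          intro t ht
          have hKt := hKnn t ht.out
          rw [abs_mul, abs_of_nonneg hKt]
          calc K t * |f t - f x| ≤ K t * (L * P t) :=
                mul_le_mul_of_nonneg_left (hPb t ht) hKt
            _ = L * (K t * P t) := by ring
      _ = L * ∫ t in Ioi (0:ℝ), K t * P t := integral_const_mul L _
  -- evaluate the integral of K * P
  have hKPval : κ * ∫ t in Ioi (0:ℝ), K t * P t
      = c0 * (aCoef n k 0 * x^0) + c1 * (aCoef n k 1 * x^1) + c2 * (aCoef n k 2 * x^2)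
        + d0 * (aCoef n k p * x^p) + d1 * (aCoef n k (p+1) * x^(p+1))
        + d2 * (aCoef n k (p+2) * x^(p+2)) := by
    rw [hexp]
    rw [integral_add, integral_add, integral_add, integral_add, integral_add]
    · simp only [integral_const_mul]
      linear_combination c0 * Mom 0 (by omega) + c1 * Mom 1 (by omega)
        + c2 * Mom 2 (by omega) + d0 * Mom p (by omega)
        + d1 * Mom (p+1) (by omega) + d2 * Mom (p+2) (by omega)
    · exact hI0.const_mul c0
    · exact hI1.const_mul c1
    · exact (hI0.const_mul c0).add (hI1.const_mul c1)
    · exact hI2.const_mul c2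
    · exact ((hI0.const_mul c0).add (hI1.const_mul c1)).add (hI2.const_mul c2)
    · exact hIp.const_mul d0
    · exact (((hI0.const_mul c0).add (hI1.const_mul c1)).add (hI2.const_mul c2)).add
        (hIp.const_mul d0)
    · exact hIp1.const_mul d1
    · exact ((((hI0.const_mul c0).add (hI1.const_mul c1)).add (hI2.const_mul c2)).add
        (hIp.const_mul d0)).add (hIp1.const_mul d1)
    · exact hIp2.const_mul d2
  -- final computation
  rw [hsplit, abs_mul, abs_of_pos hκpos]
  calc κ * |∫ t in Ioi (0:ℝ), K t * (f t - f x)|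
      ≤ κ * (L * ∫ t in Ioi (0:ℝ), K t * P t) :=
        mul_le_mul_of_nonneg_left hbound (le_of_lt hκpos)
    _ = L * (κ * ∫ t in Ioi (0:ℝ), K t * P t) := by ring
    _ = L * ((1 + x^p + aCoef n k p * x^p) * δ
        + ((1 + x^p) * (aCoef n k 2 - 2*aCoef n k 1 + aCoef n k 0) * x^2
          + (aCoef n k (p+2) - 2*aCoef n k (p+1) + aCoef n k p) * x^(p+2)) / δ) := by
        rw [hKPval, aCoef_zero, hc0, hc1, hc2, hd0, hd1, hd2]
        have hδne : δ ≠ 0 := ne_of_gt hδ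
        field_simp
        try ring
        try simp

end AuxProof

/-- Rate of convergence for differentiable functions:
`w_p(x)|M_{n,k}(f;x) − f(x)| ≤ N_{p,k}·‖f'‖_p·x/√n`. -/
theorem Mnk_rate_C1 (k p : ℕ) (hk : 1 ≤ k) :
    ∃ N > (0 : ℝ), ∀ n : ℕ, k + p + 2 ≤ n → ∀ f f' : ℝ → ℝ,
      (∀ x ≥ (0 : ℝ), HasDerivWithinAt f (f' x) (Ici 0) x) →
      CpMem p f → CpMem p f' →
      ∀ x : ℝ, 0 < x →
        wp p x * |Mnk n k f x - f x| ≤ N * pNorm p f' * x / Real.sqrt (n : ℝ) := by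
  have hApos : (0:ℝ) < (2*(p:ℝ)+8)^(p+2) := by positivity
  have hCpos : (0:ℝ) < (2*(p:ℝ)+8)^(p+2) * (2 + (2*(p:ℝ)+4+(k:ℝ))^2) * ((p:ℝ)+2) := by
    positivity
  refine ⟨(2*(p:ℝ)+8)^(p+2)
    + 3*((2*(p:ℝ)+8)^(p+2) * (2 + (2*(p:ℝ)+4+(k:ℝ))^2) * ((p:ℝ)+2)) + 2,
    by positivity, ?_⟩
  intro n hn f f' hder hf hf' x hx
  set A : ℝ := (2*(p:ℝ)+8)^(p+2) with hAdef
  set C : ℝ := A * (2 + (2*(p:ℝ)+4+(k:ℝ))^2) * ((p:ℝ)+2) with hCdef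
  -- weight facts
  have hwpos : ∀ y : ℝ, 0 ≤ y → 0 < wp p y := by
    intro y hy
    unfold wp
    split_ifs
    · norm_num
    · have : (0:ℝ) ≤ y ^ p := pow_nonneg hy p
      positivity
  have hw2 : ∀ y : ℝ, 0 ≤ y → wp p y * (1 + y^p) ≤ 2 := by
    intro y hy
    unfold wp
    split_ifs with hp
    · subst hp; norm_num
    · have h0 : (0:ℝ) ≤ y ^ p := pow_nonneg hy p
      have hne : (1:ℝ) + y^p ≠ 0 := by positivity
      rw [one_div, inv_mul_cancel₀ hne]
      norm_num
  have hw1 : ∀ y : ℝ, 0 ≤ y → wp p y * y^p ≤ 1 := by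
    intro y hy
    unfold wp
    split_ifs with hp
    · subst hp; simp
    · have h0 : (0:ℝ) ≤ y ^ p := pow_nonneg hy p
      have hpos : (0:ℝ) < 1 + y^p := by positivity
      rw [one_div, inv_mul_eq_div, div_le_one hpos]
      linarith
  have hwge : ∀ y : ℝ, 0 ≤ y → 1 ≤ wp p y * (1 + y^p) := by
    intro y hy
    unfold wp
    split_ifs with hp
    · subst hp; norm_num
    · have h0 : (0:ℝ) ≤ y ^ p := pow_nonneg hy p
      have hne : (1:ℝ) + y^p ≠ 0 := by positivity
      rw [one_div, inv_mul_cancel₀ hne]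
  -- generic bound transfer
  have habs_bound : ∀ (g : ℝ → ℝ) (Bg : ℝ), (∀ y ≥ (0:ℝ), |wp p y * g y| ≤ Bg) →
      ∀ y : ℝ, 0 ≤ y → |g y| ≤ Bg * (1 + y^p) := by
    intro g Bg hg y hy
    have hw := hwpos y hy
    have h2 := hg y hy
    rw [abs_mul, abs_of_pos hw] at h2
    have h3 := hwge y hy
    have h4 : (0:ℝ) ≤ 1 + y^p := by
      have : (0:ℝ) ≤ y ^ p := pow_nonneg hy p
      linarith
    nlinarith [mul_le_mul_of_nonneg_right h2 h4,
      mul_le_mul_of_nonneg_left h3 (abs_nonneg (g y))]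
  -- the norm L
  set L : ℝ := pNorm p f' with hLdef
  obtain ⟨B', hB'⟩ := hf'.1
  have hbdd : BddAbove (Set.range fun u : {y : ℝ // 0 ≤ y} => wp p u.val * |f' u.val|) := by
    refine ⟨B', ?_⟩
    rintro z ⟨u, rfl⟩
    show wp p u.val * |f' u.val| ≤ B'
    rw [← abs_of_pos (hwpos u.val u.2), ← abs_mul]
    exact hB' u.val u.2
  have hLb : ∀ y : ℝ, 0 ≤ y → wp p y * |f' y| ≤ L := by
    intro y hy
    rw [hLdef]
    exact le_ciSup hbdd ⟨y, hy⟩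
  have hL0 : 0 ≤ L := by
    have := hLb 0 le_rfl
    have h0 : 0 ≤ wp p 0 * |f' 0| := mul_nonneg (hwpos 0 le_rfl).le (abs_nonneg _)
    linarith
  have hf'b : ∀ y : ℝ, 0 ≤ y → |f' y| ≤ L * (1 + y^p) := by
    apply habs_bound
    intro y hy
    rw [abs_mul, abs_of_pos (hwpos y hy)]
    exact hLb y hy
  -- continuity
  have hfc : ContinuousOn f (Ici (0:ℝ)) := fun y hy => (hder y hy).continuousWithinAt
  have hwpc : ContinuousOn (fun y : ℝ => wp p y) (Ici (0:ℝ)) := by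
    unfold wp
    split_ifs
    · exact continuousOn_const
    · apply ContinuousOn.div continuousOn_const (by fun_prop)
      intro y hy
      have : (0:ℝ) ≤ y ^ p := pow_nonneg hy.out p
      positivity
  have hwf'c : ContinuousOn (fun y : ℝ => wp p y * f' y) (Ici (0:ℝ)) :=
    hf'.2.continuousOn
  have hf'c : ContinuousOn f' (Ici (0:ℝ)) := by
    apply ContinuousOn.congr (hwf'c.div hwpc (fun y hy => ne_of_gt (hwpos y hy.out)))
    intro y hy
    show f' y = (wp p y * f' y) / wp p y
    rw [mul_comm, mul_div_assoc, div_self (ne_of_gt (hwpos y hy.out)), mul_one]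
  -- bound for f
  obtain ⟨B, hB⟩ := hf.1
  have hfb : ∀ t : ℝ, 0 < t → |f t| ≤ B * (1 + t^p) :=
    fun t ht => habs_bound f B hB t (le_of_lt ht)
  -- the FTC difference bound
  have hdiff : ∀ t : ℝ, 0 < t → |f t - f x| ≤ L * ((1 + x^p + t^p) * |t - x|) := by
    intro t ht
    have hxppos : (0:ℝ) ≤ x ^ p := pow_nonneg hx.le p
    have htppos : (0:ℝ) ≤ t ^ p := pow_nonneg ht.le p
    have main : ∀ a b : ℝ, 0 < a → a ≤ b → (∀ u, a ≤ u → u ≤ b → u ^ p ≤ x^p + t^p) →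
        |f b - f a| ≤ L * ((1 + x^p + t^p) * |b - a|) := by
      intro a b ha hab hup
      have hIcc : Icc a b ⊆ Ici (0:ℝ) := fun u hu => le_trans ha.le hu.1
      have hderu : ∀ u ∈ Ioo a b, HasDerivWithinAt f (f' u) (Ioi u) u := by
        intro u hu
        have hu0 : (0:ℝ) ≤ u := le_trans ha.le hu.1.le
        exact (hder u hu0).mono (fun v hv => le_trans hu0 (le_of_lt hv))
      have hint : IntervalIntegrable f' volume a b := by
        apply ContinuousOn.intervalIntegrable
        apply hf'c.mono
        rw [uIcc_of_le hab]
        exact hIcc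
      have heq := intervalIntegral.integral_eq_sub_of_hasDeriv_right_of_le hab
        (hfc.mono hIcc) hderu hint
      have hb := intervalIntegral.norm_integral_le_of_norm_le_const
        (C := L * (1 + x^p + t^p)) (f := f') (a := a) (b := b) ?_
      · rw [heq, Real.norm_eq_abs] at hb
        calc |f b - f a| ≤ L * (1 + x^p + t^p) * |b - a| := hb
          _ = L * ((1 + x^p + t^p) * |b - a|) := by ring
      · intro u hu
        rw [uIoc_of_le hab] at hu
        have hu0 : 0 < u := lt_of_lt_of_le ha hu.1.le
        have hup' := hup u hu.1.le hu.2
        rw [Real.norm_eq_abs]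
        calc |f' u| ≤ L * (1 + u^p) := hf'b u hu0.le
          _ ≤ L * (1 + x^p + t^p) := by
              apply mul_le_mul_of_nonneg_left _ hL0
              linarith
    rcases le_total x t with hle | hle
    · exact main x t hx hle (fun u hu1 hu2 => by
        have : u ^ p ≤ t ^ p := pow_le_pow_left₀ (le_trans hx.le hu1) hu2 p
        linarith)
    · have h1 := main t x ht hle (fun u hu1 hu2 => by
        have : u ^ p ≤ x ^ p := pow_le_pow_left₀ (le_trans ht.le hu1) hu2 p
        linarith)
      rw [abs_sub_comm (f x) (f t), abs_sub_comm x t] at h1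
      exact h1
  -- apply the core estimate
  have hn1 : (0:ℝ) < (n:ℝ) := by
    have : (0:ℕ) < n := by omega
    exact_mod_cast this
  set s : ℝ := Real.sqrt (n:ℝ) with hsdef
  have hspos : 0 < s := Real.sqrt_pos.2 hn1
  have hss : s * s = (n:ℝ) := Real.mul_self_sqrt hn1.le
  set δ : ℝ := x / s with hδdef
  have hδ : 0 < δ := div_pos hx hspos
  have hcore := core_est n k p hk hn x δ hx hδ f hfc B L hL0 hfb hdiff
  -- coefficient bounds
  have hap : aCoef n k p ≤ A := by
    calc aCoef n k p ≤ (2*(p:ℝ)+8)^p := aCoef_le n k p hk hn p (by omega)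
      _ ≤ A := by
          rw [hAdef]
          exact pow_le_pow_right₀ (by linarith [show (0:ℝ) ≤ (p:ℝ) from by positivity]) (by omega)
  have hCn : (0:ℝ) ≤ C / n := by positivity
  -- assemble
  have hwx : 0 < wp p x := hwpos x hx.le
  set D0 : ℝ := aCoef n k 2 - 2*aCoef n k 1 + aCoef n k 0 with hD0def
  set Dp : ℝ := aCoef n k (p+2) - 2*aCoef n k (p+1) + aCoef n k p with hDpdef
  have hD0 : D0 ≤ C / n := by
    have h := aCoef_diff_le n k p 0 hk hn (by omega)
    rw [hD0def, hCdef, hAdef]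
    simpa using h
  have hDp : Dp ≤ C / n := by
    have h := aCoef_diff_le n k p p hk hn le_rfl
    rw [hDpdef, hCdef, hAdef]
    exact h
  have t1 : wp p x * (1 + x^p + aCoef n k p * x^p) ≤ 2 + A := by
    have u1 : aCoef n k p * (wp p x * x^p) ≤ A * 1 :=
      mul_le_mul hap (hw1 x hx.le) (mul_nonneg hwx.le (pow_nonneg hx.le p)) hApos.le
    calc wp p x * (1 + x^p + aCoef n k p * x^p)
        = wp p x * (1+x^p) + aCoef n k p * (wp p x * x^p) := by ring
      _ ≤ 2 + A * 1 := add_le_add (hw2 x hx.le) u1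
      _ = 2 + A := by ring
  have t2 : wp p x * ((1 + x^p) * D0 * x^2 + Dp * x^(p+2)) ≤ 3*(C/n)*x^2 := by
    have v1 : (wp p x * (1+x^p)) * D0 ≤ 2 * (C/n) := by
      calc (wp p x * (1+x^p)) * D0 ≤ (wp p x * (1+x^p)) * (C/n) := by
            apply mul_le_mul_of_nonneg_left hD0
            have : (0:ℝ) ≤ x ^ p := pow_nonneg hx.le p
            positivity
        _ ≤ 2 * (C/n) := mul_le_mul_of_nonneg_right (hw2 x hx.le) hCn
    have v2 : (wp p x * x^p) * Dp ≤ 1 * (C/n) := by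
      calc (wp p x * x^p) * Dp ≤ (wp p x * x^p) * (C/n) := by
            apply mul_le_mul_of_nonneg_left hDp
            exact mul_nonneg hwx.le (pow_nonneg hx.le p)
        _ ≤ 1 * (C/n) := mul_le_mul_of_nonneg_right (hw1 x hx.le) hCn
    calc wp p x * ((1 + x^p) * D0 * x^2 + Dp * x^(p+2))
        = ((wp p x * (1+x^p)) * D0) * x^2 + ((wp p x * x^p) * Dp) * x^2 := by
          rw [pow_add]; ring
      _ ≤ (2*(C/n)) * x^2 + (1*(C/n)) * x^2 :=
          add_le_add (mul_le_mul_of_nonneg_right v1 (by positivity))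
            (mul_le_mul_of_nonneg_right v2 (by positivity))
      _ = 3*(C/n)*x^2 := by ring
  calc wp p x * |Mnk n k f x - f x|
      ≤ wp p x * (L * ((1 + x^p + aCoef n k p * x^p) * δ
          + ((1 + x^p) * D0 * x^2 + Dp * x^(p+2)) / δ)) :=
        mul_le_mul_of_nonneg_left hcore hwx.le
    _ = L * ((wp p x * (1 + x^p + aCoef n k p * x^p)) * δ
          + (wp p x * ((1 + x^p) * D0 * x^2 + Dp * x^(p+2))) / δ) := by ring
    _ ≤ L * ((2 + A) * δ + (3*(C/n)*x^2) / δ) := by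
        apply mul_le_mul_of_nonneg_left _ hL0
        apply add_le_add (mul_le_mul_of_nonneg_right t1 hδ.le)
        exact (div_le_div_iff_of_pos_right hδ).2 t2
    _ = (A + 3*C + 2) * L * x / s := by
        rw [hδdef, ← hss]
        have hsne : s ≠ 0 := ne_of_gt hspos
        have hxne : x ≠ 0 := ne_of_gt hx
        field_simp
        ring
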